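/- Let A be a 4×4 real matrix with Aᵀ η A = η (where η = diag(−1,1,1,1)) and A₀₀ ≥ 1, let v⃗ ∈ ℝ³ be a Euclidean unit vector, and let b ∈ ℝ. Then there exists a nonzero linear functional L on ℝ⁴ such that {x ∈ H³ | v⃗ · Φ₁(x, Ax) + b = 0} = {x ∈ H³ | L(x) = 0}, where Φ₁ denotes the first component of the Pogorelov map and · is the Euclidean dot product on ℝ³; explicitly one may take L(x) = 2 v⃗ · x⃗ + b(x₀ + (Ax)₀). In other words, the level set is the intersection of H³ with a 3-dimensional linear subspace of ℝ⁴, i.e. a geodesic plane of H³. -/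

import Mathlib

noncomputable section
open Matrix

/-- Minkowski inner product on ℝ⁴: ⟨x,y⟩ = −x₀y₀ + x₁y₁ + x₂y₂ + x₃y₃. -/
def mink (x y : Fin 4 → ℝ) : ℝ :=
  -(x 0 * y 0) + x 1 * y 1 + x 2 * y 2 + x 3 * y 3

/-- The hyperboloid model of hyperbolic 3-space. -/
def Hyp : Set (Fin 4 → ℝ) := {x | 0 < x 0 ∧ mink x x = -1}

/-- Spatial part x⃗ of x = (x₀, x⃗). -/
def spat (x : Fin 4 → ℝ) : Fin 3 → ℝ := fun i => x i.succ

/-- The Pogorelov map Φ(x,y) = (2x⃗/(x₀+y₀), 2y⃗/(x₀+y₀)). -/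
def pog (x y : Fin 4 → ℝ) : (Fin 3 → ℝ) × (Fin 3 → ℝ) :=
  ((2 / (x 0 + y 0)) • spat x, (2 / (x 0 + y 0)) • spat y)

/-- Euclidean dot product on ℝ³. -/
def dot3 (a b : Fin 3 → ℝ) : ℝ := a 0 * b 0 + a 1 * b 1 + a 2 * b 2

/-- Euclidean norm on ℝ³. -/
def enorm3 (a : Fin 3 → ℝ) : ℝ := Real.sqrt (a 0 ^ 2 + a 1 ^ 2 + a 2 ^ 2)

/-- The matrix η = diag(−1,1,1,1) of the Minkowski inner product. -/
def eta : Matrix (Fin 4) (Fin 4) ℝ := Matrix.diagonal ![(-1 : ℝ), 1, 1, 1]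

lemma mink_eq_dot (x y : Fin 4 → ℝ) : mink x y = x ⬝ᵥ eta.mulVec y := by
  simp [mink, eta, Matrix.mulVec, dotProduct, Fin.sum_univ_four, Matrix.diagonal]

lemma eta_sq : eta * eta = 1 := by
  ext i j
  fin_cases i <;> fin_cases j <;>
    simp [eta, Matrix.mul_apply, Fin.sum_univ_four, Matrix.diagonal, Matrix.one_apply]

lemma eta_row (A : Matrix (Fin 4) (Fin 4) ℝ) (hA : Aᵀ * eta * A = eta) :
    A * eta * Aᵀ = eta := by
  have h1 : (eta * Aᵀ * eta) * A = 1 := by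
    calc (eta * Aᵀ * eta) * A = eta * (Aᵀ * eta * A) := by simp [Matrix.mul_assoc]
    _ = 1 := by rw [hA, eta_sq]
  have h2 : A * (eta * Aᵀ * eta) = 1 := mul_eq_one_comm.mp h1
  calc A * eta * Aᵀ = (A * (eta * Aᵀ * eta)) * eta := by
        rw [Matrix.mul_assoc, Matrix.mul_assoc, Matrix.mul_assoc, eta_sq]
        simp [Matrix.mul_assoc]
    _ = eta := by rw [h2, Matrix.one_mul]

lemma mink_invariant (A : Matrix (Fin 4) (Fin 4) ℝ) (hA : Aᵀ * eta * A = eta)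
    (x : Fin 4 → ℝ) : mink (A.mulVec x) (A.mulVec x) = mink x x := by
  rw [mink_eq_dot, mink_eq_dot]
  calc A.mulVec x ⬝ᵥ eta.mulVec (A.mulVec x)
      = x ᵥ* Aᵀ ⬝ᵥ (eta * A).mulVec x := by rw [Matrix.vecMul_transpose, Matrix.mulVec_mulVec]
    _ = x ⬝ᵥ (Aᵀ * eta * A).mulVec x := by
          simp only [Matrix.dotProduct_mulVec, Matrix.vecMul_vecMul, Matrix.mulVec_mulVec,
            Matrix.mul_assoc]
    _ = x ⬝ᵥ eta.mulVec x := by rw [hA]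

/-- The level set {x ∈ H³ | v⃗·Φ₁(x,Ax) + b = 0} is the intersection of H³ with
the kernel of a nonzero linear functional, explicitly
L(x) = 2 v⃗·x⃗ + b(x₀ + (Ax)₀); i.e. it is a geodesic plane of H³. -/
theorem level_set_is_geodesic_plane (A : Matrix (Fin 4) (Fin 4) ℝ)
    (hA : Aᵀ * eta * A = eta) (hA00 : 1 ≤ A 0 0)
    (v : Fin 3 → ℝ) (hv : enorm3 v = 1) (b : ℝ) :
    ∃ L : (Fin 4 → ℝ) →ₗ[ℝ] ℝ, L ≠ 0 ∧
      (∀ x : Fin 4 → ℝ, L x = 2 * dot3 v (spat x) + b * (x 0 + A.mulVec x 0)) ∧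
      {x ∈ Hyp | dot3 v (pog x (A.mulVec x)).1 + b = 0} = {x ∈ Hyp | L x = 0} := by
  -- row identity: -A00² + A01² + A02² + A03² = -1
  have hrow := congrFun (congrFun (eta_row A hA) 0) 0
  simp [Matrix.mul_apply, eta, Fin.sum_univ_four, Matrix.diagonal, Matrix.transpose_apply] at hrow
  -- positivity of (Ax)₀ + x₀ on Hyp
  have hpos : ∀ x ∈ Hyp, 0 < x 0 + A.mulVec x 0 := by
    intro x hx
    obtain ⟨hx0, hxm⟩ := hx
    have hxm' : -(x 0 * x 0) + x 1 * x 1 + x 2 * x 2 + x 3 * x 3 = -1 := hxm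
    have hy : A.mulVec x 0 = A 0 0 * x 0 + A 0 1 * x 1 + A 0 2 * x 2 + A 0 3 * x 3 := by
      simp [Matrix.mulVec, dotProduct, Fin.sum_univ_four]
    rw [hy]
    nlinarith [sq_nonneg (A 0 1 * x 2 - A 0 2 * x 1), sq_nonneg (A 0 1 * x 3 - A 0 3 * x 1),
      sq_nonneg (A 0 2 * x 3 - A 0 3 * x 2),
      sq_nonneg (A 0 0 * x 0 + (A 0 1 * x 1 + A 0 2 * x 2 + A 0 3 * x 3)),
      mul_pos (lt_of_lt_of_le one_pos hA00) hx0,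
      sq_nonneg (A 0 0 * x 0 + x 0), sq_nonneg (A 0 0 + x 0)]
  refine ⟨{ toFun := fun x => 2 * dot3 v (spat x) + b * (x 0 + A.mulVec x 0),
            map_add' := ?_, map_smul' := ?_ }, ?_, ?_, ?_⟩
  · intro x y
    simp [dot3, spat, Matrix.mulVec_add, Matrix.mulVec, dotProduct, Fin.sum_univ_four]
    ring
  · intro c x
    simp [dot3, spat, Matrix.mulVec_smul, Matrix.mulVec, dotProduct, Fin.sum_univ_four, smul_eq_mul]
    ring
  · -- nonzero
    intro hL
    have hb : b = 0 := by
      have h0 := LinearMap.congr_fun hL (Pi.single 0 1)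
      norm_num [dot3, spat, Matrix.mulVec, dotProduct, Fin.sum_univ_four, Pi.single_apply,
        Fin.ext_iff, Fin.val_succ] at h0
      rcases h0 with h | h
      · exact h
      · nlinarith
    have hvz : ∀ j : Fin 3, v j = 0 := by
      intro j
      have h0 := LinearMap.congr_fun hL (Pi.single j.succ 1)
      fin_cases j <;>
        simpa [dot3, spat, Matrix.mulVec, dotProduct, Fin.sum_univ_four, Pi.single_apply, hb, Fin.ext_iff, Fin.val_succ]
          using h0
    rw [enorm3, hvz 0, hvz 1, hvz 2] at hv
    norm_num at hv
  · intro x; rfl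
  · ext x
    simp only [Set.mem_setOf_eq, LinearMap.coe_mk, AddHom.coe_mk]
    constructor
    · rintro ⟨hx, he⟩
      refine ⟨hx, ?_⟩
      have hd := hpos x hx
      have hd' : x 0 + A.mulVec x 0 ≠ 0 := ne_of_gt hd
      have key : 2 * dot3 v (spat x) + b * (x 0 + A.mulVec x 0)
          = (x 0 + A.mulVec x 0) * (dot3 v (pog x (A.mulVec x)).1 + b) := by
        simp only [pog, dot3, Pi.smul_apply, smul_eq_mul]
        field_simp
      rw [key, he, mul_zero]
    · rintro ⟨hx, he⟩
      refine ⟨hx, ?_⟩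
      have hd := hpos x hx
      have hd' : x 0 + A.mulVec x 0 ≠ 0 := ne_of_gt hd
      have key : 2 * dot3 v (spat x) + b * (x 0 + A.mulVec x 0)
          = (x 0 + A.mulVec x 0) * (dot3 v (pog x (A.mulVec x)).1 + b) := by
        simp only [pog, dot3, Pi.smul_apply, smul_eq_mul]
        field_simp
      rw [key] at he
      rcases mul_eq_zero.mp he with h | h
      · exact absurd h hd'
      · exact h
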